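/- Let X and Y be independent exponentially distributed random variables with means a > 0 and b > 0, and define C_s = max(0, log₂(1+X) − log₂(1+Y)). Then the outage probability P(C_s < R) tends to b/(a+b) as R tends to 0 from above. -/

import Mathlib

open MeasureTheory ProbabilityTheory Real Filter Set
open scoped ENNReal NNReal Topology

section OutageAux

lemma expMeasure_apply' {r : ℝ} {s : Set ℝ} (hs : MeasurableSet s) :
    expMeasure r s = ∫⁻ x in s, exponentialPDF r x := by
  rw [expMeasure, gammaMeasure, withDensity_apply _ hs]; rfl

lemma expMeasure_Iic' {r : ℝ} (hr : 0 < r) (x : ℝ) :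
    expMeasure r (Iic x) = ENNReal.ofReal (if 0 ≤ x then 1 - rexp (-(r * x)) else 0) := by
  rw [expMeasure_apply' measurableSet_Iic, lintegral_exponentialPDF_eq_antiDeriv hr x]

lemma expMeasure_singleton' (r x : ℝ) : expMeasure r {x} = 0 := by
  rw [expMeasure_apply' (measurableSet_singleton x)]
  exact setLIntegral_measure_zero _ _ (measure_singleton x)

lemma expMeasure_Iio' {r : ℝ} (hr : 0 < r) (x : ℝ) :
    expMeasure r (Iio x) = expMeasure r (Iic x) := by
  apply le_antisymm (measure_mono Iio_subset_Iic_self)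
  calc expMeasure r (Iic x) = expMeasure r (Iio x ∪ {x}) := by rw [Iio_union_right]
    _ ≤ expMeasure r (Iio x) + expMeasure r {x} := measure_union_le _ _
    _ = expMeasure r (Iio x) := by rw [expMeasure_singleton', add_zero]

lemma expMeasure_Ici' {r : ℝ} (hr : 0 < r) {x : ℝ} (hx : 0 ≤ x) :
    expMeasure r (Ici x) = ENNReal.ofReal (rexp (-(r * x))) := by
  have hprob := isProbabilityMeasure_expMeasure hr
  have h1 : expMeasure r (Ici x) = 1 - expMeasure r (Iio x) := by
    rw [← compl_Iio, prob_compl_eq_one_sub measurableSet_Iio]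
  have he1 : rexp (-(r * x)) ≤ 1 := by
    rw [exp_le_one_iff]
    simp only [Left.neg_nonpos_iff]
    exact mul_nonneg hr.le hx
  have hsum : (1 : ℝ≥0∞) = ENNReal.ofReal (1 - rexp (-(r * x))) + ENNReal.ofReal (rexp (-(r * x))) := by
    rw [← ENNReal.ofReal_add (by linarith) (exp_pos _).le]
    norm_num
  rw [h1, expMeasure_Iio' hr, expMeasure_Iic' hr, if_pos hx, hsum,
    ENNReal.add_sub_cancel_left ENNReal.ofReal_ne_top]

instance expMeasure.instSFinite (r : ℝ) : SFinite (expMeasure r) :=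
  inferInstanceAs (SFinite (volume.withDensity (gammaPDF 1 r)))

lemma prod_exp_le_measure {a b : ℝ} (ha : 0 < a) (hb : 0 < b) :
    ((expMeasure (1/a)).prod (expMeasure (1/b))) {p : ℝ × ℝ | p.1 ≤ p.2}
      = ENNReal.ofReal (b / (a + b)) := by
  have hra : (0:ℝ) < 1/a := by positivity
  have hrb : (0:ℝ) < 1/b := by positivity
  have hs : (0:ℝ) < 1/a + 1/b := by positivity
  haveI hproba := isProbabilityMeasure_expMeasure hra
  haveI hprob := isProbabilityMeasure_expMeasure hrb
  have hmsle : MeasurableSet {p : ℝ × ℝ | p.1 ≤ p.2} :=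
    measurableSet_le measurable_fst measurable_snd
  rw [Measure.prod_apply hmsle]
  have hslice : ∀ x : ℝ, (Prod.mk x ⁻¹' {p : ℝ × ℝ | p.1 ≤ p.2}) = Ici x := fun x => rfl
  simp_rw [hslice]
  have hanti : Antitone (fun x : ℝ => expMeasure (1/b) (Ici x)) :=
    fun x y hxy => measure_mono (Ici_subset_Ici.2 hxy)
  have hpdfm : Measurable (exponentialPDF (1/a)) :=
    (measurable_exponentialPDFReal (1/a)).ennreal_ofReal
  rw [show expMeasure (1/a) = volume.withDensity (exponentialPDF (1/a)) from rfl,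
    lintegral_withDensity_eq_lintegral_mul _ hpdfm hanti.measurable]
  rw [← lintegral_add_compl _ (measurableSet_Ici (a := (0:ℝ)))]
  have hzero : ∫⁻ x in (Ici (0:ℝ))ᶜ,
      (exponentialPDF (1/a) * fun x => expMeasure (1/b) (Ici x)) x = 0 := by
    rw [compl_Ici]
    have hz : ∫⁻ x in Iio (0:ℝ),
        (exponentialPDF (1/a) * fun x => expMeasure (1/b) (Ici x)) x
        = ∫⁻ _x in Iio (0:ℝ), (0:ℝ≥0∞) :=
      setLIntegral_congr_fun measurableSet_Iio
        (fun x (hx : x < 0) => by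
          simp [Pi.mul_apply, exponentialPDF_of_neg hx])
    rw [hz, lintegral_zero]
  rw [hzero, add_zero]
  have hIci : ∫⁻ x in Ici (0:ℝ),
      (exponentialPDF (1/a) * fun x => expMeasure (1/b) (Ici x)) x
      = ∫⁻ x in Ici (0:ℝ), ENNReal.ofReal ((1/a) * rexp (-((1/a + 1/b) * x))) := by
    apply setLIntegral_congr_fun measurableSet_Ici
    refine (fun x (hx : 0 ≤ x) => ?_)
    rw [Pi.mul_apply, exponentialPDF_of_nonneg hx, expMeasure_Ici' hrb hx,
      ← ENNReal.ofReal_mul (by positivity)]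
    congr 1
    rw [mul_assoc, ← exp_add]
    ring_nf
  have hint0 : IntegrableOn (fun x : ℝ => rexp (-(1/a + 1/b) * x)) (Ioi 0) :=
    exp_neg_integrableOn_Ioi 0 hs
  simp only [neg_mul] at hint0
  have hint : IntegrableOn (fun x : ℝ => (1/a) * rexp (-((1/a + 1/b) * x))) (Ioi 0) :=
    hint0.const_mul (1/a)
  have hofReal : ENNReal.ofReal (∫ x in Ioi (0:ℝ), (1/a) * rexp (-((1/a + 1/b) * x)))
      = ∫⁻ x in Ioi (0:ℝ), ENNReal.ofReal ((1/a) * rexp (-((1/a + 1/b) * x))) :=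
    ofReal_integral_eq_lintegral_ofReal hint
      (ae_of_all _ (fun x => by positivity))
  have hreal : (∫ x in Ioi (0:ℝ), (1/a) * rexp (-((1/a + 1/b) * x))) = b / (a + b) := by
    rw [MeasureTheory.integral_const_mul]
    have h2 := integral_comp_mul_left_Ioi (fun y => rexp (-y)) 0 hs
    simp only [mul_zero, smul_eq_mul] at h2
    rw [h2, integral_exp_neg_Ioi_zero, mul_one]
    have h3 : 1/a + 1/b = (a + b)/(a*b) := by field_simp; ring
    rw [h3, inv_div, div_mul_div_comm, one_mul,
      div_eq_div_iff (by positivity) (by positivity)]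
    ring
  rw [hIci, ← Measure.restrict_congr_set Ioi_ae_eq_Ici, ← hofReal, hreal]

end OutageAux

/-- Asymptotics of the outage probability as the target rate tends to `0⁺`: for
independent exponential random variables `X` (mean `a`) and `Y` (mean `b`) and secrecy
capacity `C_s = max 0 (log₂(1+X) - log₂(1+Y))`,
`P(C_s < R) → b/(a+b)` as `R → 0⁺`. -/
theorem outage_probability_tendsto_zero_rate
    {Ω : Type*} [MeasureSpace Ω] [IsProbabilityMeasure (ℙ : Measure Ω)]
    (X Y : Ω → ℝ) (a b : ℝ) (ha : 0 < a) (hb : 0 < b)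
    (hXm : Measurable X) (hYm : Measurable Y)
    (hindep : IndepFun X Y ℙ)
    (hX : Measure.map X ℙ = expMeasure (1 / a))
    (hY : Measure.map Y ℙ = expMeasure (1 / b)) :
    Tendsto (fun R : ℝ => ℙ {ω | max 0 (logb 2 (1 + X ω) - logb 2 (1 + Y ω)) < R})
      (nhdsWithin 0 (Set.Ioi 0)) (nhds (ENNReal.ofReal (b / (a + b)))) := by
  have hra : (0:ℝ) < 1/a := by positivity
  have hrb : (0:ℝ) < 1/b := by positivity
  set L : ℝ≥0∞ := ENNReal.ofReal (b / (a + b)) with hL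
  set C : Ω → ℝ := fun ω => max 0 (logb 2 (1 + X ω) - logb 2 (1 + Y ω)) with hC
  have hCm : Measurable C := by
    apply measurable_const.max
    apply Measurable.sub
    · exact (Real.measurable_log.comp (measurable_const.add hXm)).div_const _
    · exact (Real.measurable_log.comp (measurable_const.add hYm)).div_const _
  -- P(X ≤ Y) = L
  have hmsle : MeasurableSet {p : ℝ × ℝ | p.1 ≤ p.2} :=
    measurableSet_le measurable_fst measurable_snd
  have hXY : ℙ {ω | X ω ≤ Y ω} = L := by
    have hmap : Measure.map (fun ω => (X ω, Y ω)) ℙ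
        = (Measure.map X ℙ).prod (Measure.map Y ℙ) :=
      (indepFun_iff_map_prod_eq_prod_map_map hXm.aemeasurable hYm.aemeasurable).mp hindep
    have hset : {ω | X ω ≤ Y ω} = (fun ω => (X ω, Y ω)) ⁻¹' {p : ℝ × ℝ | p.1 ≤ p.2} := rfl
    rw [hset, ← Measure.map_apply (hXm.prodMk hYm) hmsle, hmap, hX, hY,
      prod_exp_le_measure ha hb]
  -- a.e. nonnegativity
  have hXnn : ∀ᵐ ω ∂ℙ, 0 ≤ X ω := by
    rw [ae_iff]
    have : {ω | ¬ 0 ≤ X ω} = X ⁻¹' (Iio 0) := by ext ω; simp [not_le]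
    rw [this, ← Measure.map_apply hXm measurableSet_Iio, hX, expMeasure_Iio' hra,
      expMeasure_Iic' hra]
    simp
  have hYnn : ∀ᵐ ω ∂ℙ, 0 ≤ Y ω := by
    rw [ae_iff]
    have : {ω | ¬ 0 ≤ Y ω} = Y ⁻¹' (Iio 0) := by ext ω; simp [not_le]
    rw [this, ← Measure.map_apply hYm measurableSet_Iio, hY, expMeasure_Iio' hrb,
      expMeasure_Iic' hrb]
    simp
  -- P(C ≤ 0) = L
  have hC0 : ℙ {ω | C ω ≤ 0} = L := by
    rw [← hXY]
    apply measure_congr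
    rw [Filter.eventuallyEq_set]
    filter_upwards [hXnn, hYnn] with ω hx hy
    simp only [Set.mem_setOf_eq, hC, max_le_iff, le_refl, true_and, sub_nonpos]
    rw [Real.logb_le_logb (by norm_num : (1:ℝ) < 2) (by linarith) (by linarith)]
    constructor <;> intro h <;> linarith
  -- sequence limit
  set S : ℕ → Set Ω := fun n => {ω | C ω < 1 / (n + 1)} with hS
  have hSm : ∀ n, MeasurableSet (S n) := fun n => measurableSet_lt hCm measurable_const
  have hSa : Antitone S := by
    intro n m hnm ω (hω : C ω < 1 / (m + 1))
    refine lt_of_lt_of_le hω ?_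
    apply one_div_le_one_div_of_le (by positivity)
    have : (n : ℝ) ≤ m := Nat.cast_le.2 hnm
    linarith
  have hSi : ⋂ n, S n = {ω | C ω ≤ 0} := by
    ext ω
    simp only [Set.mem_iInter, hS, Set.mem_setOf_eq]
    constructor
    · intro h
      by_contra hpos
      push_neg at hpos
      obtain ⟨n, hn⟩ := exists_nat_one_div_lt hpos
      exact absurd (h n) (not_lt.2 hn.le)
    · intro h n
      exact lt_of_le_of_lt h (by positivity)
  have htend : Tendsto (fun n => ℙ (S n)) atTop (𝓝 L) := by
    have h1 := tendsto_measure_iInter_atTop (μ := ℙ) (fun n => (hSm n).nullMeasurableSet) hSa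
      ⟨0, measure_ne_top _ _⟩
    rw [hSi, hC0] at h1
    exact h1
  -- lower bound
  have hlow : ∀ R : ℝ, 0 < R → L ≤ ℙ {ω | C ω < R} := by
    intro R hR
    rw [← hC0]
    exact measure_mono (fun ω (hω : C ω ≤ 0) => lt_of_le_of_lt hω hR)
  rw [show (fun R : ℝ => ℙ {ω | max 0 (logb 2 (1 + X ω) - logb 2 (1 + Y ω)) < R})
      = fun R : ℝ => ℙ {ω | C ω < R} from rfl]
  rw [tendsto_order]
  constructor
  · intro c hc
    filter_upwards [self_mem_nhdsWithin] with R hR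
    exact lt_of_lt_of_le hc (hlow R hR)
  · intro c hc
    obtain ⟨n, hn⟩ := (htend.eventually_lt_const hc).exists
    have hpos : (0:ℝ) < 1 / (n + 1) := by positivity
    filter_upwards [Ioo_mem_nhdsGT_of_mem ⟨le_refl (0:ℝ), hpos⟩] with R hR
    refine lt_of_le_of_lt ?_ hn
    exact measure_mono (fun ω (hω : C ω < R) => lt_trans hω hR.2)
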